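/- (Theorem 2, converse) Let σ̃ be a Markov policy such that, with the mean-field flow generated by σ̃ itself (z_{k+1} = φ(z_k, σ̃_k(z_k))), σ̃ is sequentially rational: for every Markov policy σ, every t ∈ {1,…,T}, z ∈ PMF X and x ∈ X, J_t^{σ̃}(z,x) ≥ J_t^{σ}(z,x). Then the family θ := σ̃ satisfies the fixed-point property: for every t, z, x and every π ∈ PMF A, ∑_a σ̃_t(z)(x)(a)·Q_t(z,x,a,σ̃_t(z)) ≥ ∑_a π(a)·Q_t(z,x,a,σ̃_t(z)), where Q and V are defined by the backward recursion from θ = σ̃. -/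

import Mathlib

set_option linter.unusedSectionVars false
set_option linter.unusedVariables false


open scoped BigOperators ENNReal

section MFG

variable {X A : Type*} [Fintype X] [Fintype A] [Nonempty X] [Nonempty A]

/-- McKean–Vlasov update: `phi τ z γ (y) = ∑ x, ∑ a, z x * γ x a * τ x a z y`. -/
noncomputable def phi (τ : X → A → PMF X → PMF X) (z : PMF X) (γ : X → PMF A) : PMF X :=
  z.bind fun x => (γ x).bind fun a => τ x a z

/-- Backward-recursive value function with `V (T+1) = 0`. -/
noncomputable def V (τ : X → A → PMF X → PMF X) (R : X → A → PMF X → ℝ) (δ : ℝ)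
    (T : ℕ) (θ : ℕ → PMF X → X → PMF A) (t : ℕ) (z : PMF X) (x : X) : ℝ :=
  if h : T < t then 0
  else
    ∑ a : A, ((θ t z x) a).toReal *
      (R x a z + δ * ∑ x' : X, ((τ x a z) x').toReal *
        V τ R δ T θ (t + 1) (phi τ z (θ t z)) x')
termination_by T + 1 - t
decreasing_by omega

/-- Action-value function `Q_t(z,x,a,γ)`. -/
noncomputable def Q (τ : X → A → PMF X → PMF X) (R : X → A → PMF X → ℝ) (δ : ℝ)
    (T : ℕ) (θ : ℕ → PMF X → X → PMF A) (t : ℕ) (z : PMF X) (x : X) (a : A)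
    (γ : X → PMF A) : ℝ :=
  R x a z + δ * ∑ x' : X, ((τ x a z) x').toReal * V τ R δ T θ (t + 1) (phi τ z γ) x'

/-- The fixed-point property of the equilibrium generating family `θ`. -/
def IsFixedPoint (τ : X → A → PMF X → PMF X) (R : X → A → PMF X → ℝ) (δ : ℝ)
    (T : ℕ) (θ : ℕ → PMF X → X → PMF A) : Prop :=
  ∀ t, 1 ≤ t → t ≤ T → ∀ (z : PMF X) (x : X) (π : PMF A),
    ∑ a : A, ((θ t z x) a).toReal * Q τ R δ T θ t z x a (θ t z) ≥
      ∑ a : A, (π a).toReal * Q τ R δ T θ t z x a (θ t z)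

/-- Mean-field flow generated by the policy `θ`, started from `z` at time `t`:
`flow τ θ t z n = z_{t+n}`. -/
noncomputable def flow (τ : X → A → PMF X → PMF X) (θ : ℕ → PMF X → X → PMF A)
    (t : ℕ) (z : PMF X) : ℕ → PMF X
  | 0 => z
  | n + 1 => phi τ (flow τ θ t z n) (θ (t + n) (flow τ θ t z n))

/-- Individual state trajectory: `traj x xs 0 = x`, `traj x xs (i+1) = xs i`. -/
def traj {n : ℕ} (x : X) (xs : Fin n → X) : Fin (n + 1) → X := Fin.cases x xs

/-- Path-sum expected discounted return `J_t^σ(z,x)` of the Markov policy `σ`,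
against the mean-field flow generated by `θ` started from `z` at time `t`. -/
noncomputable def J (τ : X → A → PMF X → PMF X) (R : X → A → PMF X → ℝ) (δ : ℝ)
    (T : ℕ) (θ σ : ℕ → PMF X → X → PMF A) (t : ℕ) (z : PMF X) (x : X) : ℝ :=
  ∑ as : Fin (T - t + 1) → A, ∑ xs : Fin (T - t) → X,
    ((∏ k : Fin (T - t + 1),
        ((σ (t + (k : ℕ)) (flow τ θ t z (k : ℕ)) (traj x xs k)) (as k)).toReal) *
      (∏ k : Fin (T - t),
        ((τ (traj x xs k.castSucc) (as k.castSucc) (flow τ θ t z (k : ℕ)))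
          (traj x xs k.succ)).toReal)) *
    (∑ k : Fin (T - t + 1),
      δ ^ (k : ℕ) * R (traj x xs k) (as k) (flow τ θ t z (k : ℕ)))

lemma sum_pi_succ {β M : Type*} [Fintype β] [AddCommMonoid M] {n : ℕ}
    (f : (Fin (n + 1) → β) → M) :
    ∑ g : Fin (n + 1) → β, f g = ∑ b : β, ∑ g : Fin n → β, f (Fin.cons b g) := by
  rw [← (Fin.consEquiv fun _ => β).sum_comp f, Fintype.sum_prod_type]
  rfl

lemma sum_pmf_toReal {β : Type*} [Fintype β] (p : PMF β) : ∑ b : β, (p b).toReal = 1 := by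
  have h : ∑ b : β, p b = 1 := by rw [← p.tsum_coe, tsum_fintype]
  rw [← ENNReal.toReal_sum (fun b _ => p.apply_ne_top b), h, ENNReal.toReal_one]

lemma flow_shift (τ : X → A → PMF X → PMF X) (θ : ℕ → PMF X → X → PMF A)
    (t : ℕ) (z : PMF X) (n : ℕ) :
    flow τ θ (t + 1) (flow τ θ t z 1) n = flow τ θ t z (n + 1) := by
  induction n with
  | zero => rfl
  | succ n ih => show phi τ _ _ = phi τ _ _; rw [ih]; ring_nf

lemma flow_zero (τ : X → A → PMF X → PMF X) (θ : ℕ → PMF X → X → PMF A)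
    (t : ℕ) (z : PMF X) : flow τ θ t z 0 = z := rfl

lemma traj_eq_cons {n : ℕ} (x : X) (xs : Fin n → X) : traj x xs = Fin.cons x xs := rfl

noncomputable def Pr (τ : X → A → PMF X → PMF X) (θ σ : ℕ → PMF X → X → PMF A)
    (n t : ℕ) (z : PMF X) (x : X) (as : Fin (n + 1) → A) (xs : Fin n → X) : ℝ :=
  (∏ k : Fin (n + 1),
      ((σ (t + (k : ℕ)) (flow τ θ t z (k : ℕ)) (traj x xs k)) (as k)).toReal) *
    (∏ k : Fin n,
      ((τ (traj x xs k.castSucc) (as k.castSucc) (flow τ θ t z (k : ℕ)))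
        (traj x xs k.succ)).toReal)

noncomputable def Gr (τ : X → A → PMF X → PMF X) (R : X → A → PMF X → ℝ) (δ : ℝ)
    (θ : ℕ → PMF X → X → PMF A)
    (n t : ℕ) (z : PMF X) (x : X) (as : Fin (n + 1) → A) (xs : Fin n → X) : ℝ :=
  ∑ k : Fin (n + 1), δ ^ (k : ℕ) * R (traj x xs k) (as k) (flow τ θ t z (k : ℕ))

lemma Pr_cons (τ : X → A → PMF X → PMF X) (θ σ : ℕ → PMF X → X → PMF A)
    (n t : ℕ) (z : PMF X) (x : X) (a : A) (x1 : X)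
    (as : Fin (n + 1) → A) (xs : Fin n → X) :
    Pr τ θ σ (n + 1) t z x (Fin.cons a as) (Fin.cons x1 xs) =
      ((σ t z x) a).toReal * ((τ x a z) x1).toReal *
        Pr τ θ σ n (t + 1) (flow τ θ t z 1) x1 as xs := by
  unfold Pr
  have hσ : (∏ k : Fin (n + 1 + 1),
      ((σ (t + (k : ℕ)) (flow τ θ t z (k : ℕ)) (traj x (Fin.cons x1 xs) k))
        ((Fin.cons a as : Fin (n + 1 + 1) → A) k)).toReal)
      = ((σ t z x) a).toReal *
        ∏ k : Fin (n + 1), ((σ (t + 1 + (k : ℕ))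
          (flow τ θ (t + 1) (flow τ θ t z 1) (k : ℕ)) (traj x1 xs k)) (as k)).toReal := by
    rw [Fin.prod_univ_succ]
    refine congrArg₂ (· * ·) (by simp [traj_eq_cons, flow_zero]) (Finset.prod_congr rfl fun k _ => ?_)
    have e : t + ((k : ℕ) + 1) = t + 1 + (k : ℕ) := by omega
    simp only [Fin.val_succ, flow_shift, traj_eq_cons, Fin.cons_succ, e]
  have hτ : (∏ k : Fin (n + 1),
      ((τ (traj x (Fin.cons x1 xs) k.castSucc) ((Fin.cons a as : Fin (n + 1 + 1) → A) k.castSucc)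
        (flow τ θ t z (k : ℕ))) (traj x (Fin.cons x1 xs) k.succ)).toReal)
      = ((τ x a z) x1).toReal *
        ∏ k : Fin n, ((τ (traj x1 xs k.castSucc) (as k.castSucc)
          (flow τ θ (t + 1) (flow τ θ t z 1) (k : ℕ))) (traj x1 xs k.succ)).toReal := by
    rw [Fin.prod_univ_succ]
    refine congrArg₂ (· * ·) (by simp [traj_eq_cons, flow_zero]) (Finset.prod_congr rfl fun k _ => ?_)
    simp only [Fin.val_succ, flow_shift, traj_eq_cons, ← Fin.succ_castSucc, Fin.cons_succ]
  rw [hσ, hτ]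
  ring

lemma Gr_cons (τ : X → A → PMF X → PMF X) (R : X → A → PMF X → ℝ) (δ : ℝ)
    (θ : ℕ → PMF X → X → PMF A) (n t : ℕ) (z : PMF X) (x : X) (a : A) (x1 : X)
    (as : Fin (n + 1) → A) (xs : Fin n → X) :
    Gr τ R δ θ (n + 1) t z x (Fin.cons a as) (Fin.cons x1 xs) =
      R x a z + δ * Gr τ R δ θ n (t + 1) (flow τ θ t z 1) x1 as xs := by
  unfold Gr
  rw [Fin.sum_univ_succ, Finset.mul_sum]
  refine congrArg₂ (· + ·) (by simp [traj_eq_cons, flow_zero]) (Finset.sum_congr rfl fun k _ => ?_)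
  simp only [Fin.val_succ, flow_shift, traj_eq_cons, Fin.cons_succ, pow_succ]
  ring

noncomputable def Jaux (τ : X → A → PMF X → PMF X) (R : X → A → PMF X → ℝ) (δ : ℝ)
    (θ σ : ℕ → PMF X → X → PMF A) (n t : ℕ) (z : PMF X) (x : X) : ℝ :=
  ∑ as : Fin (n + 1) → A, ∑ xs : Fin n → X,
    Pr τ θ σ n t z x as xs * Gr τ R δ θ n t z x as xs

lemma Pr_mass (τ : X → A → PMF X → PMF X) (θ σ : ℕ → PMF X → X → PMF A) :
    ∀ (n t : ℕ) (z : PMF X) (x : X),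
      ∑ as : Fin (n + 1) → A, ∑ xs : Fin n → X, Pr τ θ σ n t z x as xs = 1 := by
  intro n
  induction n with
  | zero =>
    intro t z x
    rw [sum_pi_succ]
    have h : ∀ a : A, ∑ as : Fin 0 → A, ∑ xs : Fin 0 → X,
        Pr τ θ σ 0 t z x (Fin.cons a as) xs = ((σ t z x) a).toReal := by
      intro a
      rw [Fintype.sum_unique, Fintype.sum_unique]
      simp [Pr, flow_zero, traj_eq_cons]
    rw [Finset.sum_congr rfl fun a _ => h a]
    exact sum_pmf_toReal _
  | succ n ih =>
    intro t z x
    rw [sum_pi_succ]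
    have key : ∀ a : A, ∑ as : Fin (n + 1) → A, ∑ xs : Fin (n + 1) → X,
        Pr τ θ σ (n + 1) t z x (Fin.cons a as) xs = ((σ t z x) a).toReal := by
      intro a
      have h1 : ∀ as : Fin (n + 1) → A, ∑ xs : Fin (n + 1) → X,
          Pr τ θ σ (n + 1) t z x (Fin.cons a as) xs
          = ∑ x1 : X, ∑ xs : Fin n → X,
            ((σ t z x) a).toReal * ((τ x a z) x1).toReal *
              Pr τ θ σ n (t + 1) (flow τ θ t z 1) x1 as xs := by
        intro as
        rw [sum_pi_succ]
        exact Finset.sum_congr rfl fun x1 _ => Finset.sum_congr rfl fun xs _ =>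
          Pr_cons τ θ σ n t z x a x1 as xs
      rw [Finset.sum_congr rfl fun as _ => h1 as, Finset.sum_comm]
      have h2 : ∀ x1 : X, ∑ as : Fin (n + 1) → A, ∑ xs : Fin n → X,
          ((σ t z x) a).toReal * ((τ x a z) x1).toReal *
            Pr τ θ σ n (t + 1) (flow τ θ t z 1) x1 as xs
          = ((σ t z x) a).toReal * ((τ x a z) x1).toReal := by
        intro x1
        simp_rw [mul_assoc, ← Finset.mul_sum]
        rw [ih (t + 1) (flow τ θ t z 1) x1, mul_one]
      rw [Finset.sum_congr rfl fun x1 _ => h2 x1, ← Finset.mul_sum, sum_pmf_toReal, mul_one]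
    rw [Finset.sum_congr rfl fun a _ => key a]
    exact sum_pmf_toReal _

lemma sum_sum_mul_add {ι κ : Type*} [Fintype ι] [Fintype κ] (c d r : ℝ)
    (P G : ι → κ → ℝ) :
    ∑ i : ι, ∑ j : κ, (c * P i j) * (r + d * G i j)
      = c * r * (∑ i : ι, ∑ j : κ, P i j) + c * d * (∑ i : ι, ∑ j : κ, P i j * G i j) := by
  simp only [Finset.mul_sum, ← Finset.sum_add_distrib]
  exact Finset.sum_congr rfl fun i _ => Finset.sum_congr rfl fun j _ => by ring

lemma Jaux_succ (τ : X → A → PMF X → PMF X) (R : X → A → PMF X → ℝ) (δ : ℝ)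
    (θ σ : ℕ → PMF X → X → PMF A) (n t : ℕ) (z : PMF X) (x : X) :
    Jaux τ R δ θ σ (n + 1) t z x
      = ∑ a : A, ((σ t z x) a).toReal *
          (R x a z + δ * ∑ x1 : X, ((τ x a z) x1).toReal *
            Jaux τ R δ θ σ n (t + 1) (flow τ θ t z 1) x1) := by
  conv_lhs => rw [Jaux]
  rw [sum_pi_succ]
  refine Finset.sum_congr rfl fun a _ => ?_
  have h1 : ∀ as : Fin (n + 1) → A, ∑ xs : Fin (n + 1) → X,
      Pr τ θ σ (n + 1) t z x (Fin.cons a as) xs * Gr τ R δ θ (n + 1) t z x (Fin.cons a as) xs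
      = ∑ x1 : X, ∑ xs : Fin n → X,
        ((((σ t z x) a).toReal * ((τ x a z) x1).toReal) *
            Pr τ θ σ n (t + 1) (flow τ θ t z 1) x1 as xs) *
          (R x a z + δ * Gr τ R δ θ n (t + 1) (flow τ θ t z 1) x1 as xs) := by
    intro as
    rw [sum_pi_succ]
    refine Finset.sum_congr rfl fun x1 _ => Finset.sum_congr rfl fun xs _ => ?_
    rw [Pr_cons, Gr_cons, mul_assoc]
  rw [Finset.sum_congr rfl fun as _ => h1 as, Finset.sum_comm]
  have h2 : ∀ x1 : X, ∑ as : Fin (n + 1) → A, ∑ xs : Fin n → X,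
      ((((σ t z x) a).toReal * ((τ x a z) x1).toReal) *
          Pr τ θ σ n (t + 1) (flow τ θ t z 1) x1 as xs) *
        (R x a z + δ * Gr τ R δ θ n (t + 1) (flow τ θ t z 1) x1 as xs)
      = (((σ t z x) a).toReal * ((τ x a z) x1).toReal) * R x a z
        + (((σ t z x) a).toReal * ((τ x a z) x1).toReal) * δ *
            Jaux τ R δ θ σ n (t + 1) (flow τ θ t z 1) x1 := by
    intro x1
    rw [sum_sum_mul_add, Pr_mass, mul_one]
    rfl
  have h3 : ∑ x1 : X, (((σ t z x) a).toReal * ((τ x a z) x1).toReal) * R x a z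
      = ((σ t z x) a).toReal * R x a z := by
    rw [show ∑ x1 : X, (((σ t z x) a).toReal * ((τ x a z) x1).toReal) * R x a z
        = (((σ t z x) a).toReal * R x a z) * ∑ x1 : X, ((τ x a z) x1).toReal by
      rw [Finset.mul_sum]; exact Finset.sum_congr rfl fun _ _ => by ring]
    rw [sum_pmf_toReal, mul_one]
  rw [Finset.sum_congr rfl fun x1 _ => h2 x1, Finset.sum_add_distrib, h3, mul_add]
  congr 1
  simp only [Finset.mul_sum]
  exact Finset.sum_congr rfl fun x1 _ => by ring

lemma Jaux_zero (τ : X → A → PMF X → PMF X) (R : X → A → PMF X → ℝ) (δ : ℝ)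
    (θ σ : ℕ → PMF X → X → PMF A) (t : ℕ) (z : PMF X) (x : X) :
    Jaux τ R δ θ σ 0 t z x = ∑ a : A, ((σ t z x) a).toReal * R x a z := by
  unfold Jaux
  rw [sum_pi_succ]
  refine Finset.sum_congr rfl fun a _ => ?_
  rw [Fintype.sum_unique, Fintype.sum_unique]
  simp [Pr, Gr, flow_zero, traj_eq_cons]

lemma J_eq_Jaux (τ : X → A → PMF X → PMF X) (R : X → A → PMF X → ℝ) (δ : ℝ)
    (T : ℕ) (θ σ : ℕ → PMF X → X → PMF A) (t : ℕ) (z : PMF X) (x : X) :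
    J τ R δ T θ σ t z x = Jaux τ R δ θ σ (T - t) t z x := rfl

lemma V_top (τ : X → A → PMF X → PMF X) (R : X → A → PMF X → ℝ) (δ : ℝ)
    (T : ℕ) (θ : ℕ → PMF X → X → PMF A) (t : ℕ) (ht : T < t) (z : PMF X) (x : X) :
    V τ R δ T θ t z x = 0 := by
  rw [V]; exact dif_pos ht

lemma flow_one (τ : X → A → PMF X → PMF X) (θ : ℕ → PMF X → X → PMF A)
    (t : ℕ) (z : PMF X) : flow τ θ t z 1 = phi τ z (θ t z) := rfl

lemma Jaux_eq_V (τ : X → A → PMF X → PMF X) (R : X → A → PMF X → ℝ) (δ : ℝ)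
    (T : ℕ) (σt : ℕ → PMF X → X → PMF A) :
    ∀ (n t : ℕ), T - t = n → t ≤ T → ∀ (z : PMF X) (x : X),
      Jaux τ R δ σt σt n t z x = V τ R δ T σt t z x := by
  intro n
  induction n with
  | zero =>
    intro t hn ht z x
    have htT : t = T := by omega
    subst htT
    rw [Jaux_zero, V, dif_neg (by omega)]
    refine Finset.sum_congr rfl fun a _ => ?_
    rw [Finset.sum_congr rfl fun x' (_ : x' ∈ Finset.univ) => by
      rw [V_top τ R δ t σt (t + 1) (by omega) (phi τ z (σt t z)) x']]
    simp
  | succ n ih =>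
    intro t hn ht z x
    have h1 : t + 1 ≤ T := by omega
    have h2 : T - (t + 1) = n := by omega
    rw [Jaux_succ, V, dif_neg (by omega)]
    refine Finset.sum_congr rfl fun a _ => ?_
    rw [flow_one]
    refine congrArg₂ _ rfl (congrArg₂ _ rfl (congrArg (fun s => δ * s)
      (Finset.sum_congr rfl fun x' _ => ?_)))
    rw [ih (t + 1) h2 h1 (phi τ z (σt t z)) x']

lemma Jaux_congr (τ : X → A → PMF X → PMF X) (R : X → A → PMF X → ℝ) (δ : ℝ)
    (θ σ₁ σ₂ : ℕ → PMF X → X → PMF A) (n t : ℕ) (z : PMF X) (x : X)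
    (h : ∀ k, t ≤ k → σ₁ k = σ₂ k) :
    Jaux τ R δ θ σ₁ n t z x = Jaux τ R δ θ σ₂ n t z x := by
  unfold Jaux Pr
  refine Finset.sum_congr rfl fun as _ => Finset.sum_congr rfl fun xs _ => ?_
  have hk : ∀ k : Fin (n + 1), σ₁ (t + (k : ℕ)) = σ₂ (t + (k : ℕ)) :=
    fun k => h _ (Nat.le_add_right _ _)
  exact congrArg₂ _ (congrArg₂ _
    (Finset.prod_congr rfl fun k _ => by rw [hk k]) rfl) rfl

lemma J_dev (τ : X → A → PMF X → PMF X) (R : X → A → PMF X → ℝ) (δ : ℝ)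
    (T : ℕ) (σt : ℕ → PMF X → X → PMF A) (t : ℕ) (htT : t ≤ T)
    (z : PMF X) (x : X) (σ : ℕ → PMF X → X → PMF A)
    (hσ : ∀ k, t + 1 ≤ k → σ k = σt k) :
    J τ R δ T σt σ t z x
      = ∑ a : A, ((σ t z x) a).toReal * Q τ R δ T σt t z x a (σt t z) := by
  rcases Nat.lt_or_ge t T with hlt | hge
  · have hn : T - t = (T - (t + 1)) + 1 := by omega
    rw [J_eq_Jaux, hn, Jaux_succ]
    refine Finset.sum_congr rfl fun a _ => ?_
    unfold Q
    rw [flow_one]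
    refine congrArg₂ _ rfl (congrArg₂ _ rfl (congrArg (fun s => δ * s)
      (Finset.sum_congr rfl fun x' _ => ?_)))
    rw [Jaux_congr τ R δ σt σ σt (T - (t + 1)) (t + 1) (phi τ z (σt t z)) x'
        (fun k hk => hσ k hk),
      Jaux_eq_V τ R δ T σt (T - (t + 1)) (t + 1) rfl (by omega)]
  · have htT' : t = T := le_antisymm htT hge
    have hn : T - t = 0 := by omega
    rw [J_eq_Jaux, hn, Jaux_zero]
    refine Finset.sum_congr rfl fun a _ => ?_
    unfold Q
    rw [Finset.sum_congr rfl fun x' (_ : x' ∈ Finset.univ) => by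
      rw [V_top τ R δ T σt (t + 1) (by omega) (phi τ z (σt t z)) x']]
    simp

/-- Theorem 2, converse: if the Markov policy `σ̃` is sequentially rational
against the mean-field flow generated by itself, then `θ := σ̃` satisfies the fixed-point
property of the backward recursion. -/
theorem sequentially_rational_implies_fixed_point
    (τ : X → A → PMF X → PMF X) (R : X → A → PMF X → ℝ) (δ : ℝ)
    (hδ0 : 0 < δ) (hδ1 : δ ≤ 1) (T : ℕ) (hT : 1 ≤ T)
    (σt : ℕ → PMF X → X → PMF A)
    (hrat : ∀ (σ : ℕ → PMF X → X → PMF A) (t : ℕ), 1 ≤ t → t ≤ T →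
      ∀ (z : PMF X) (x : X), J τ R δ T σt σt t z x ≥ J τ R δ T σt σ t z x) :
    IsFixedPoint τ R δ T σt := by
  unfold IsFixedPoint
  intro t ht1 htT z x π
  classical
  set σ' : ℕ → PMF X → X → PMF A :=
    fun k w y => if k = t ∧ w = z ∧ y = x then π else σt k w y with hσ'def
  have hup : ∀ k, t + 1 ≤ k → σ' k = σt k := by
    intro k hk
    funext w y
    simp only [hσ'def]
    rw [if_neg]
    rintro ⟨rfl, -, -⟩
    omega
  have hσ't : σ' t z x = π := by simp [hσ'def]
  have hL := J_dev τ R δ T σt t htT z x σt (fun _ _ => rfl)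
  have hR := J_dev τ R δ T σt t htT z x σ' hup
  rw [hσ't] at hR
  rw [← hL, ← hR]
  exact hrat σ' t ht1 htT z x

end MFG
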